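/- Let q, q_d : I → S² be differentiable curves on an interval I with ⟨q_d(t), q(t)⟩ > −1 for all t ∈ I. Then for all t ∈ I, (d/dt) Ψ(q(t), q_d(t)) = ⟨e_q(q(t), q_d(t)), q̇(t) − 𝒯(q(t), q_d(t))·q̇_d(t)⟩; i.e., the time derivative of the reduced-attitude error function equals the inner product of the reduced-attitude error vector with the velocity error e_{q̇} := q̇ − 𝒯(q, q_d)·q̇_d. -/

import Mathlib

open scoped RealInnerProductSpace

/-- Cross product on ℝ³ (as `EuclideanSpace ℝ (Fin 3)`). -/
noncomputable def cross (a b : EuclideanSpace ℝ (Fin 3)) : EuclideanSpace ℝ (Fin 3) :=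
  WithLp.toLp 2 ![a 1 * b 2 - a 2 * b 1, a 2 * b 0 - a 0 * b 2, a 0 * b 1 - a 1 * b 0]

/-- Reduced-attitude error function Ψ(q, q_d) = 2 − √2·√(1 + ⟨q_d, q⟩). -/
noncomputable def Psi (q qd : EuclideanSpace ℝ (Fin 3)) : ℝ :=
  2 - Real.sqrt 2 * Real.sqrt (1 + ⟪qd, q⟫)

/-- Reduced-attitude error vector e_q(q, q_d). -/
noncomputable def eVec (q qd : EuclideanSpace ℝ (Fin 3)) : EuclideanSpace ℝ (Fin 3) :=
  (1 / (Real.sqrt 2 * Real.sqrt (1 + ⟪qd, q⟫))) • cross q (cross q qd)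

/-- Transport map 𝒯(q, q_d)·v = (q_d × v) × q. -/
noncomputable def transport (q qd v : EuclideanSpace ℝ (Fin 3)) : EuclideanSpace ℝ (Fin 3) :=
  cross (cross qd v) q

lemma key (q qd p d : EuclideanSpace ℝ (Fin 3))
    (h1 : ⟪q,q⟫ = 1) (h2 : ⟪qd,qd⟫ = 1) (h3 : ⟪q,p⟫ = 0) (h4 : ⟪qd,d⟫ = 0) :
    ⟪cross q (cross q qd), p - cross (cross qd d) q⟫ = -(⟪d, q⟫ + ⟪qd, p⟫) := by
  simp only [PiLp.inner_apply, RCLike.inner_apply, conj_trivial, Fin.sum_univ_three, cross,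
    PiLp.sub_apply, Matrix.cons_val_zero, Matrix.cons_val_one, Matrix.head_cons,
    Matrix.cons_val_two, Matrix.tail_cons, PiLp.toLp_apply] at *
  linear_combination (q 0 * qd 0 + q 1 * qd 1 + q 2 * qd 2) * h3 +
    ((q 0^2 + q 1^2 + q 2^2) * (q 0 * qd 0 + q 1 * qd 1 + q 2 * qd 2)) * h4 +
    (-(qd 0 * p 0 + qd 1 * p 1 + qd 2 * p 2) - (qd 0^2 + qd 1^2 + qd 2^2) * (d 0 * q 0 + d 1 * q 1 + d 2 * q 2)) * h1 +
    (-(d 0 * q 0 + d 1 * q 1 + d 2 * q 2)) * h2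

/-- orthogonality of a unit-norm curve and its derivative -/
lemma orth {I : Set ℝ} (hI : IsOpen I) {q : ℝ → EuclideanSpace ℝ (Fin 3)} {q' : ℝ → EuclideanSpace ℝ (Fin 3)}
    (hq : ∀ t ∈ I, ‖q t‖ = 1) (hq' : ∀ t ∈ I, HasDerivAt q (q' t) t) {t : ℝ} (ht : t ∈ I) :
    ⟪q t, q' t⟫ = 0 := by
  have hd : HasDerivAt (fun s => ⟪q s, q s⟫) (⟪q t, q' t⟫ + ⟪q' t, q t⟫) t :=
    (hq' t ht).inner ℝ (hq' t ht)
  have hc : HasDerivAt (fun s => ⟪q s, q s⟫ : ℝ → ℝ) 0 t := by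
    refine (hasDerivAt_const t (1:ℝ)).congr_of_eventuallyEq ?_
    filter_upwards [hI.mem_nhds ht] with s hs
    rw [real_inner_self_eq_norm_sq, hq s hs]; norm_num
  have := hd.unique hc
  linarith [real_inner_comm (q t) (q' t)]

/-- The time derivative of the reduced-attitude error function along differentiable
curves q, q_d in S² equals ⟨e_q, e_{q̇}⟩ where e_{q̇} = q̇ − 𝒯(q,q_d)·q̇_d. -/
theorem deriv_psi_eq_inner_velocity_error
    (I : Set ℝ) (hI : IsOpen I)
    (q qd q' qd' : ℝ → EuclideanSpace ℝ (Fin 3))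
    (hq : ∀ t ∈ I, ‖q t‖ = 1) (hqd : ∀ t ∈ I, ‖qd t‖ = 1)
    (hq' : ∀ t ∈ I, HasDerivAt q (q' t) t)
    (hqd' : ∀ t ∈ I, HasDerivAt qd (qd' t) t)
    (hang : ∀ t ∈ I, ⟪qd t, q t⟫ > -1) :
    ∀ t ∈ I,
      HasDerivAt (fun s => Psi (q s) (qd s))
        ⟪eVec (q t) (qd t), q' t - transport (q t) (qd t) (qd' t)⟫ t := by
  intro t ht
  have hpos : (0:ℝ) < 1 + ⟪qd t, q t⟫ := by linarith [hang t ht]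
  have hsq : Real.sqrt (1 + ⟪qd t, q t⟫) > 0 := Real.sqrt_pos.2 hpos
  have hc : HasDerivAt (fun s => 1 + ⟪qd s, q s⟫)
      (⟪qd t, q' t⟫ + ⟪qd' t, q t⟫) t := by
    exact ((hqd' t ht).inner ℝ (hq' t ht)).const_add 1
  have hroot : HasDerivAt (fun s => Real.sqrt (1 + ⟪qd s, q s⟫))
      (1 / (2 * Real.sqrt (1 + ⟪qd t, q t⟫)) * (⟪qd t, q' t⟫ + ⟪qd' t, q t⟫)) t :=
    (Real.hasDerivAt_sqrt (ne_of_gt hpos)).comp t hc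
  have hPsi : HasDerivAt (fun s => Psi (q s) (qd s))
      (-(Real.sqrt 2 * (1 / (2 * Real.sqrt (1 + ⟪qd t, q t⟫)) * (⟪qd t, q' t⟫ + ⟪qd' t, q t⟫)))) t := by
    exact (hroot.const_mul (Real.sqrt 2)).const_sub 2
  convert hPsi using 1
  have h1 : ⟪q t, q t⟫ = 1 := by rw [real_inner_self_eq_norm_sq, hq t ht]; norm_num
  have h2 : ⟪qd t, qd t⟫ = 1 := by rw [real_inner_self_eq_norm_sq, hqd t ht]; norm_num
  have h3 := orth hI hq hq' ht
  have h4 := orth hI hqd hqd' ht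
  rw [eVec, transport, real_inner_smul_left, key _ _ _ _ h1 h2 h3 h4]
  have h2' : Real.sqrt 2 * Real.sqrt 2 = 2 := Real.mul_self_sqrt (by norm_num)
  have hsne : Real.sqrt (1 + ⟪qd t, q t⟫) ≠ 0 := ne_of_gt hsq
  have h2ne : Real.sqrt 2 ≠ 0 := by positivity
  have hinv : (Real.sqrt 2)⁻¹ = Real.sqrt 2 / 2 := by
    rw [eq_div_iff (by norm_num : (2:ℝ) ≠ 0), ← h2']
    field_simp
    rw [Real.sq_sqrt (sq_nonneg (Real.sqrt 2))]
  field_simp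
  ring_nf
  rw [Real.sq_sqrt (by norm_num : (0:ℝ) ≤ 2)]
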